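/- Let V ⊆ V' be an immediate extension of valuation rings with fraction fields K ⊆ K', and suppose x ∈ V' is a pseudo limit of a pseudo convergent sequence (v_j)_{j<λ} in V which has no pseudo limit in K. If (v_j) is transcendental (for every f ∈ V[X], val(f(v_j)) is eventually constant in j), then x is transcendental over K. -/

import Mathlib

open Polynomial

section ValuationDefs

variable {Γ : Type*} [AddCommGroup Γ] [LinearOrder Γ] [IsOrderedAddMonoid Γ] {K : Type*} [Field K]

/-- `val` is an (additive, Krull) valuation on the field `K` with values in
`WithTop Γ`: `val 0 = ⊤`, nonzero elements have values in `Γ`, `val` is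
multiplicative-to-additive and satisfies the ultrametric inequality.
The valuation ring is `{x | 0 ≤ val x}`. -/
def IsAddValuation (val : K → WithTop Γ) : Prop :=
  val 0 = ⊤ ∧ (∀ x : K, x ≠ 0 → val x ≠ ⊤) ∧
    (∀ x y : K, val (x * y) = val x + val y) ∧
    ∀ x y : K, min (val x) (val y) ≤ val (x + y)

/-- The valuation ring of the subfield `K₀` gives an immediate extension inside
the valued field `K`: the inclusion induces isomorphisms on value groups and on
residue fields. -/
def IsImmediate (val : K → WithTop Γ) (K₀ : Subfield K) : Prop :=
  (∀ x : K, x ≠ 0 → ∃ y ∈ K₀, val y = val x) ∧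
    ∀ x : K, val x = 0 → ∃ y ∈ K₀, 0 < val (x - y)

/-- `(v i)_{i < lam}` is a pseudo convergent sequence:
`val (v i - v i'') < val (v i' - v i'')` for `i < i' < i'' < lam`. -/
def PseudoConvergent (val : K → WithTop Γ) (lam : Ordinal) (v : Ordinal → K) : Prop :=
  ∀ i i' i'' : Ordinal, i < i' → i' < i'' → i'' < lam →
    val (v i - v i'') < val (v i' - v i'')

/-- `x` is a pseudo limit of `(v i)_{i < lam}`: `val (x - v i)` is strictly
increasing in `i`. -/
def IsPseudoLimit (val : K → WithTop Γ) (lam : Ordinal) (v : Ordinal → K) (x : K) : Prop :=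
  ∀ i i' : Ordinal, i < i' → i' < lam → val (x - v i) < val (x - v i')

/-- the polynomial `f` has all its coefficients in the valuation ring of the
subfield `K₀`, i.e. `f ∈ V[X]` where `V = K₀ ∩ {0 ≤ val}`. -/
def CoeffsIn (val : K → WithTop Γ) (K₀ : Subfield K) (f : Polynomial K) : Prop :=
  ∀ n : ℕ, f.coeff n ∈ K₀ ∧ 0 ≤ val (f.coeff n)

/-- the values of `f` along the sequence `v` are eventually strictly
increasing (witnessing that `v` is algebraic via `f`). -/
def EvIncreasing (val : K → WithTop Γ) (lam : Ordinal) (v : Ordinal → K)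
    (f : Polynomial K) : Prop :=
  ∃ ν : Ordinal, ν < lam ∧ ∀ i i' : Ordinal, ν < i → i < i' → i' < lam →
    val (f.eval (v i)) < val (f.eval (v i'))

end ValuationDefs

section Helpers
variable {Γ : Type*} [AddCommGroup Γ] [LinearOrder Γ] [IsOrderedAddMonoid Γ] {K : Type*} [Field K]
variable {val : K → WithTop Γ}

lemma val_one_eq (hval : IsAddValuation val) : val 1 = 0 := by
  have h := hval.2.2.1 1 1
  rw [mul_one] at h
  obtain ⟨a, ha⟩ := WithTop.ne_top_iff_exists.mp (hval.2.1 1 one_ne_zero)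
  rw [← ha, ← WithTop.coe_add] at h
  have h2 : a = a + a := by exact_mod_cast h
  have h3 : a = 0 := by
    have := add_left_cancel (a := a) (b := (0:Γ)) (c := a) (by rw [add_zero]; exact h2)
    exact this.symm
  rw [← ha, h3, WithTop.coe_zero]

lemma val_neg_eq (hval : IsAddValuation val) (a : K) : val (-a) = val a := by
  have hm : val (-1 : K) = 0 := by
    have h := hval.2.2.1 (-1 : K) (-1)
    rw [neg_mul_neg, one_mul, val_one_eq hval] at h
    obtain ⟨b, hb⟩ := WithTop.ne_top_iff_exists.mp (hval.2.1 (-1 : K) (by norm_num))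
    rw [← hb, ← WithTop.coe_add] at h
    have hb2 : b + b = 0 := by exact_mod_cast h.symm
    have hb0 : b = 0 := by
      rcases lt_trichotomy b 0 with h' | h' | h'
      · have := add_lt_add h' h'; rw [hb2, add_zero] at this; exact absurd this (lt_irrefl 0)
      · exact h'
      · have := add_lt_add h' h'; rw [hb2, add_zero] at this; exact absurd this (lt_irrefl 0)
    rw [← hb, hb0, WithTop.coe_zero]
  calc val (-a) = val ((-1) * a) := by rw [neg_one_mul]
    _ = val (-1 : K) + val a := hval.2.2.1 _ _
    _ = val a := by rw [hm, zero_add]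

lemma val_add_eq (hval : IsAddValuation val) {a b : K} (h : val a < val b) :
    val (a + b) = val a := by
  have h1 : val a ≤ val (a + b) := by
    have := hval.2.2.2 a b
    rwa [min_eq_left h.le] at this
  have h3 := hval.2.2.2 (a + b) (-b)
  rw [add_neg_cancel_right, val_neg_eq hval] at h3
  rcases min_le_iff.mp h3 with h4 | h4
  · exact le_antisymm h4 h1
  · exact absurd h (not_lt.mpr h4)

lemma val_lt_sum (hval : IsAddValuation val) {ι : Type*} (t : Finset ι) (g : ι → K)
    {c : WithTop Γ} (hc : c ≠ ⊤) (h : ∀ k ∈ t, c < val (g k)) :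
    c < val (∑ k ∈ t, g k) := by
  classical
  induction t using Finset.induction_on with
  | empty => simpa [hval.1] using lt_top_iff_ne_top.mpr hc
  | @insert a s hns ih =>
      rw [Finset.sum_insert hns]
      calc c < min (val (g a)) (val (∑ k ∈ s, g k)) :=
            lt_min (h a (Finset.mem_insert_self a s))
              (ih fun k hk => h k (Finset.mem_insert_of_mem hk))
        _ ≤ val (g a + ∑ k ∈ s, g k) := hval.2.2.2 _ _

lemma val_sum_eq (hval : IsAddValuation val) {ι : Type*} [DecidableEq ι] (s : Finset ι)
    (g : ι → K) {k₀ : ι} (hk₀ : k₀ ∈ s) (h0 : val (g k₀) ≠ ⊤)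
    (h : ∀ k ∈ s, k ≠ k₀ → val (g k₀) < val (g k)) :
    val (∑ k ∈ s, g k) = val (g k₀) := by
  rw [← Finset.add_sum_erase s g hk₀]
  exact val_add_eq hval (val_lt_sum hval _ g h0 (fun k hk =>
    h k (Finset.mem_of_mem_erase hk) (Finset.ne_of_mem_erase hk)))

lemma val_pow_coe (hval : IsAddValuation val) {a : K} {g : Γ} (ha : val a = (g : WithTop Γ)) :
    ∀ n : ℕ, val (a ^ n) = ((n • g : Γ) : WithTop Γ)
  | 0 => by simp [val_one_eq hval]
  | n + 1 => by
      rw [pow_succ, hval.2.2.1, val_pow_coe hval ha n, ha, succ_nsmul, WithTop.coe_add]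

lemma nsmul_lt_nsmul'' {a b : Γ} (h : a < b) : ∀ n : ℕ, n ≠ 0 → n • a < n • b := by
  intro n hn
  induction n with
  | zero => exact absurd rfl hn
  | succ m ih =>
    rcases Nat.eq_zero_or_pos m with rfl | hm
    · simpa using h
    · rw [succ_nsmul, succ_nsmul]
      exact add_lt_add (ih hm.ne') h

end Helpers

lemma exists_stable_min {Γ : Type*} [AddCommGroup Γ] [LinearOrder Γ] [IsOrderedAddMonoid Γ]
    (lam : Ordinal) (hlam : Order.IsSuccLimit lam) (γ : Ordinal → Γ)
    (hγ : ∀ i i' : Ordinal, i < i' → i' < lam → γ i < γ i')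
    (S : Finset ℕ) (hS : S.Nonempty) (c : ℕ → Γ) :
    ∃ ν : Ordinal, ν < lam ∧ ∃ k₀ ∈ S, ∀ i : Ordinal, ν < i → i < lam →
      ∀ k ∈ S, k ≠ k₀ → c k₀ + k₀ • γ i < c k + k • γ i := by
  classical
  set A : ℕ → Ordinal → Γ := fun k i => c k + k • γ i with hA
  have pair : ∀ k k' : ℕ, k < k' → ∃ ν, ν < lam ∧
      ((∀ i, ν < i → i < lam → A k i < A k' i) ∨ (∀ i, ν < i → i < lam → A k' i < A k i)) := by
    intro k k' hkk'
    obtain ⟨m, rfl⟩ : ∃ m, k' = k + m := ⟨k' - k, by omega⟩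
    have hm : m ≠ 0 := by omega
    set h : Ordinal → Γ := fun i => c (k + m) + m • γ i with hh
    have hmono : ∀ i i', i < i' → i' < lam → h i < h i' := fun i i' h1 h2 =>
      add_lt_add_right (nsmul_lt_nsmul'' (hγ i i' h1 h2) m hm) _
    have heq : ∀ i, A (k + m) i = h i + k • γ i := by
      intro i
      simp only [hA, hh, add_nsmul]
      abel
    have hiff1 : ∀ i, A k i < A (k + m) i ↔ c k < h i := by
      intro i; rw [heq i]
      exact (add_lt_add_iff_right _)
    have hiff2 : ∀ i, A (k + m) i < A k i ↔ h i < c k := by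
      intro i; rw [heq i]
      exact (add_lt_add_iff_right _)
    by_cases hcase : ∃ j, j < lam ∧ c k ≤ h j
    · obtain ⟨j, hj, hcj⟩ := hcase
      exact ⟨j, hj, Or.inl fun i h1 h2 => (hiff1 i).mpr (lt_of_le_of_lt hcj (hmono j i h1 h2))⟩
    · push_neg at hcase
      exact ⟨0, hlam.pos, Or.inr fun i _ h2 => (hiff2 i).mpr (hcase i h2)⟩
  have pair' : ∀ p : ℕ × ℕ, ∃ ν, ν < lam ∧ (p.1 ≠ p.2 →
      ((∀ i, ν < i → i < lam → A p.1 i < A p.2 i) ∨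
        (∀ i, ν < i → i < lam → A p.2 i < A p.1 i))) := by
    rintro ⟨k, k'⟩
    rcases lt_trichotomy k k' with h | h | h
    · obtain ⟨ν, h1, h2⟩ := pair k k' h; exact ⟨ν, h1, fun _ => h2⟩
    · exact ⟨0, hlam.pos, fun hne => absurd h hne⟩
    · obtain ⟨ν, h1, h2⟩ := pair k' k h; exact ⟨ν, h1, fun _ => h2.symm⟩
  choose F hF1 hF2 using pair'
  have hνlam : (S ×ˢ S).sup F < lam := by
    refine (Finset.sup_lt_iff ?_).mpr fun p _ => hF1 p
    exact hlam.pos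
  set ν := (S ×ˢ S).sup F with hν
  set i₀ := Order.succ ν with hi₀
  have hi₀lam : i₀ < lam := hlam.succ_lt hνlam
  have hνi₀ : ν < i₀ := Order.lt_succ ν
  obtain ⟨k₀, hk₀S, hk₀min⟩ := S.exists_min_image (fun k => A k i₀) hS
  refine ⟨ν, hνlam, k₀, hk₀S, ?_⟩
  intro i hνi hilam k hkS hkk₀
  have hp : (k₀, k) ∈ S ×ˢ S := Finset.mem_product.mpr ⟨hk₀S, hkS⟩
  have hFν : F (k₀, k) ≤ ν := Finset.le_sup hp
  rcases hF2 (k₀, k) (Ne.symm hkk₀) with hcase | hcase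
  · exact hcase i (lt_of_le_of_lt hFν hνi) hilam
  · exact absurd (hcase i₀ (lt_of_le_of_lt hFν hνi₀) hi₀lam) (not_lt.mpr (hk₀min k hkS))

/-- **A transcendental pseudo convergent sequence has a transcendental pseudo
limit.**  Let `V ⊆ V'` be an immediate extension of valuation rings and let
`x ∈ V'` be a pseudo limit of a pseudo convergent sequence `(v j)_{j<λ}` in `V`
with no pseudo limit in `K`.  If the sequence is transcendental (values of every
`f ∈ V[X]` along it are eventually constant), then `x` is transcendental over
`K`. -/
theorem transcendental_pseudoLimit {Γ : Type*} [AddCommGroup Γ] [LinearOrder Γ] [IsOrderedAddMonoid Γ]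
    {K' : Type*} [Field K'] (val : K' → WithTop Γ) (hval : IsAddValuation val)
    (Ksub : Subfield K') (himm : IsImmediate val Ksub)
    (lam : Ordinal) (hlam : Order.IsSuccLimit lam)
    (v : Ordinal → K') (hv : ∀ i : Ordinal, i < lam → v i ∈ Ksub ∧ 0 ≤ val (v i))
    (hpc : PseudoConvergent val lam v)
    (x : K') (hx : 0 ≤ val x) (hlim : IsPseudoLimit val lam v x)
    (hnolim : ¬ ∃ y : K', y ∈ Ksub ∧ IsPseudoLimit val lam v y)
    (htrans : ∀ f : Polynomial K', CoeffsIn val Ksub f →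
      ∃ ν : Ordinal, ν < lam ∧ ∀ i i' : Ordinal, ν < i → i < i' → i' < lam →
        val (f.eval (v i)) = val (f.eval (v i'))) :
    ∀ f : Polynomial K', f ≠ 0 → (∀ n : ℕ, f.coeff n ∈ Ksub) → f.eval x ≠ 0 := by
  intro f hf hfK heval0
  classical
  -- scale f to have coefficients in the valuation ring
  have hfsupp : f.support.Nonempty := Polynomial.support_nonempty.mpr hf
  obtain ⟨n₀, hn₀, hmin⟩ := f.support.exists_min_image (fun n => val (f.coeff n)) hfsupp
  have ha0 : f.coeff n₀ ≠ 0 := Polynomial.mem_support_iff.mp hn₀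
  obtain ⟨m₀, hm₀⟩ := WithTop.ne_top_iff_exists.mp (hval.2.1 _ ha0)
  obtain ⟨y, hyK, hyval⟩ := himm.1 (f.coeff n₀) ha0
  have hy0 : y ≠ 0 := by
    intro h
    rw [h, hval.1] at hyval
    exact hval.2.1 _ ha0 hyval.symm
  have hyinv : val y⁻¹ = ((-m₀ : Γ) : WithTop Γ) := by
    have h1 := hval.2.2.1 y y⁻¹
    rw [mul_inv_cancel₀ hy0, val_one_eq hval, hyval, ← hm₀] at h1
    obtain ⟨b, hb⟩ := WithTop.ne_top_iff_exists.mp (hval.2.1 y⁻¹ (inv_ne_zero hy0))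
    rw [← hb, ← WithTop.coe_add] at h1
    have h2 : m₀ + b = 0 := by exact_mod_cast h1.symm
    rw [← hb]
    exact WithTop.coe_inj.mpr (eq_neg_of_add_eq_zero_right h2)
  set f' : Polynomial K' := Polynomial.C y⁻¹ * f with hf'def
  have hf'0 : f' ≠ 0 := mul_ne_zero (by simpa using inv_ne_zero hy0) hf
  have hf'coeff : ∀ n, f'.coeff n = y⁻¹ * f.coeff n := fun n => by
    rw [hf'def, Polynomial.coeff_C_mul]
  have hf'K : CoeffsIn val Ksub f' := by
    intro n
    rw [hf'coeff]
    refine ⟨Subfield.mul_mem _ (Subfield.inv_mem _ hyK) (hfK n), ?_⟩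
    rw [hval.2.2.1, hyinv]
    by_cases hn : f.coeff n = 0
    · rw [hn, hval.1]; simp
    · have h1 : ((m₀ : Γ) : WithTop Γ) ≤ val (f.coeff n) := by
        rw [hm₀]
        exact hmin n (Polynomial.mem_support_iff.mpr hn)
      calc (0 : WithTop Γ) = ((-m₀ : Γ) : WithTop Γ) + ((m₀ : Γ) : WithTop Γ) := by
            rw [← WithTop.coe_add]; norm_num
        _ ≤ ((-m₀ : Γ) : WithTop Γ) + val (f.coeff n) := add_le_add_right h1 _
  have hf'x : f'.eval x = 0 := by
    rw [hf'def, Polynomial.eval_mul, Polynomial.eval_C, heval0, mul_zero]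
  -- the distances γ i
  have hxv : ∀ i, i < lam → x - v i ≠ 0 := by
    intro i hi h0
    have hi1 : Order.succ i < lam := hlam.succ_lt hi
    have h2 := hlim i (Order.succ i) (Order.lt_succ i) hi1
    rw [h0, hval.1] at h2
    exact absurd h2 not_top_lt
  have hγex : ∀ i, i < lam → ∃ g : Γ, val (v i - x) = ↑g := by
    intro i hi
    have h1 : v i - x ≠ 0 := sub_ne_zero.mpr (Ne.symm (sub_ne_zero.mp (hxv i hi)))
    obtain ⟨g, hg⟩ := WithTop.ne_top_iff_exists.mp (hval.2.1 _ h1)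
    exact ⟨g, hg.symm⟩
  set γ : Ordinal → Γ := fun i => if h : i < lam then (hγex i h).choose else 0 with hγdef
  have hγ : ∀ i, i < lam → val (v i - x) = ↑(γ i) := by
    intro i hi
    rw [hγdef]
    simp only [dif_pos hi]
    exact (hγex i hi).choose_spec
  have hγmono : ∀ i i' : Ordinal, i < i' → i' < lam → γ i < γ i' := by
    intro i i' hii' hi'
    have hi : i < lam := hii'.trans hi'
    have h1 := hlim i i' hii' hi'
    rw [show x - v i = -(v i - x) by ring, show x - v i' = -(v i' - x) by ring,
      val_neg_eq hval, val_neg_eq hval, hγ i hi, hγ i' hi'] at h1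
    exact_mod_cast h1
  -- Taylor expansion at x
  set g : Polynomial K' := Polynomial.taylor x f' with hgdef
  have hg0 : g ≠ 0 := by
    intro h
    apply hf'0
    have h2 : Polynomial.taylor (-x) g = f' := by
      rw [hgdef, Polynomial.taylor_taylor, neg_add_cancel, Polynomial.taylor_zero]
    rw [h, map_zero] at h2
    exact h2.symm
  set d := f'.natDegree with hddef
  have hgd : g.natDegree = d := Polynomial.natDegree_taylor f' x
  have hgc0 : g.coeff 0 = 0 := by rw [hgdef, Polynomial.taylor_coeff_zero, hf'x]
  set S : Finset ℕ := (Finset.range (d + 1)).filter (fun k => g.coeff k ≠ 0) with hSdef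
  have hdS : d ∈ S := by
    refine Finset.mem_filter.mpr ⟨Finset.mem_range.mpr (lt_add_one d), ?_⟩
    rw [← hgd]
    exact Polynomial.leadingCoeff_ne_zero.mpr hg0
  have hSpos : ∀ k ∈ S, k ≠ 0 := by
    intro k hk h0
    subst h0
    exact (Finset.mem_filter.mp hk).2 hgc0
  have hcex : ∀ k, k ∈ S → ∃ ck : Γ, val (g.coeff k) = ↑ck := by
    intro k hk
    obtain ⟨ck, hck⟩ := WithTop.ne_top_iff_exists.mp (hval.2.1 _ ((Finset.mem_filter.mp hk).2))
    exact ⟨ck, hck.symm⟩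
  set c : ℕ → Γ := fun k => if h : k ∈ S then (hcex k h).choose else 0 with hcdef
  have hc : ∀ k ∈ S, val (g.coeff k) = ↑(c k) := by
    intro k hk
    rw [hcdef]
    simp only [dif_pos hk]
    exact (hcex k hk).choose_spec
  -- evaluation as a sum
  have heval : ∀ i, f'.eval (v i) = ∑ k ∈ Finset.range (d + 1), g.coeff k * (v i - x) ^ k := by
    intro i
    conv_lhs => rw [show v i = (v i - x) + x by ring]
    rw [← Polynomial.taylor_eval, ← hgdef, Polynomial.eval_eq_sum_range, hgd]
  have hterm : ∀ i, i < lam → ∀ k ∈ S, val (g.coeff k * (v i - x) ^ k) = ↑(c k + k • γ i) := by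
    intro i hi k hk
    rw [hval.2.2.1, hc k hk, val_pow_coe hval (hγ i hi) k, ← WithTop.coe_add]
  -- stabilization
  obtain ⟨ν₂, hν₂, k₀, hk₀S, hstab⟩ := exists_stable_min lam hlam γ hγmono S ⟨d, hdS⟩ c
  have hvalform : ∀ i, ν₂ < i → i < lam → val (f'.eval (v i)) = ↑(c k₀ + k₀ • γ i) := by
    intro i hν hi
    rw [heval i]
    rw [val_sum_eq hval (Finset.range (d + 1)) _ ((Finset.mem_filter.mp hk₀S).1) ?_ ?_]
    · exact hterm i hi k₀ hk₀S
    · rw [hterm i hi k₀ hk₀S]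
      exact WithTop.coe_ne_top
    · intro k hkr hkk₀
      by_cases hk : g.coeff k = 0
      · rw [hk, zero_mul, hval.1, hterm i hi k₀ hk₀S]
        exact WithTop.coe_lt_top _
      · have hkS : k ∈ S := Finset.mem_filter.mpr ⟨hkr, hk⟩
        rw [hterm i hi k hkS, hterm i hi k₀ hk₀S]
        exact_mod_cast hstab i hν hi k hkS hkk₀
  -- contradiction with eventual constancy
  obtain ⟨ν₁, hν₁, hconst⟩ := htrans f' hf'K
  have hνmlam : max ν₁ ν₂ < lam := max_lt hν₁ hν₂
  set i := Order.succ (max ν₁ ν₂) with hidef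
  set i' := Order.succ i with hi'def
  have hi : i < lam := hlam.succ_lt hνmlam
  have hi' : i' < lam := hlam.succ_lt hi
  have h1 : ν₁ < i := lt_of_le_of_lt (le_max_left _ _) (Order.lt_succ _)
  have h2 : ν₂ < i := lt_of_le_of_lt (le_max_right _ _) (Order.lt_succ _)
  have hii' : i < i' := Order.lt_succ i
  have h2' : ν₂ < i' := h2.trans hii'
  have hc1 := hconst i i' h1 hii' hi'
  rw [hvalform i h2 hi, hvalform i' h2' hi'] at hc1
  have hc2 : c k₀ + k₀ • γ i = c k₀ + k₀ • γ i' := by exact_mod_cast hc1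
  have hlt : k₀ • γ i < k₀ • γ i' := nsmul_lt_nsmul'' (hγmono i i' hii' hi') k₀ (hSpos k₀ hk₀S)
  exact absurd hc2 (ne_of_lt (add_lt_add_right hlt _))
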